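/- Let π be a set partition with permutability pm(π) = d ≥ 1. Then there exists a constant c₁ > 0 (depending on π) such that B_n(π) ≥ c₁ⁿ · n^{n(1−1/d)} for all n ≥ 1. -/

import Mathlib

open Finset

/-- Two elements lie in the same block of the set partition `π`. -/
def SameBlock {n : ℕ} (π : Finpartition (univ : Finset (Fin n))) (a b : Fin n) : Prop :=
  ∃ B ∈ π.parts, a ∈ B ∧ b ∈ B

/-- Klazar containment: `π` contains `ρ` if some order-preserving injection
realizes `ρ` as the restriction of `π`. -/
def KContains {n k : ℕ} (π : Finpartition (univ : Finset (Fin n)))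
    (ρ : Finpartition (univ : Finset (Fin k))) : Prop :=
  ∃ f : Fin k ↪o Fin n, ∀ a b : Fin k, SameBlock ρ a b ↔ SameBlock π (f a) (f b)

/-- The block `T i = {i, n + σ₁ i, …, d*n + σ_d i}` (0-indexed) of the
correspondent partition `[σ₁,…,σ_d]`. -/
def corrBlock {n d : ℕ} (σ : Fin d → Equiv.Perm (Fin n)) (i : Fin n) :
    Finset (Fin ((d + 1) * n)) :=
  insert ⟨(i : ℕ), by nlinarith [i.2]⟩
    ((univ : Finset (Fin d)).image fun (j : Fin d) =>
      (⟨((j : ℕ) + 1) * n + ((σ j i : Fin n) : ℕ), by nlinarith [j.2, (σ j i).2]⟩ :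
        Fin ((d + 1) * n)))

/-- `π` is the set partition correspondent to the tuple of permutations `σ`. -/
def IsCorrespondent {n d : ℕ} (σ : Fin d → Equiv.Perm (Fin n))
    (π : Finpartition (univ : Finset (Fin ((d + 1) * n)))) : Prop :=
  π.parts = (univ : Finset (Fin n)).image (corrBlock σ)

/-- The permutability of `π` is at most `d`. -/
def HasPermLE {k : ℕ} (d : ℕ) (π : Finpartition (univ : Finset (Fin k))) : Prop :=
  ∃ (m : ℕ) (σ : Fin d → Equiv.Perm (Fin m))
    (ρ : Finpartition (univ : Finset (Fin ((d + 1) * m)))),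
    IsCorrespondent σ ρ ∧ KContains ρ π

/-- `π` has permutability exactly `d`. -/
def Permutability {k : ℕ} (π : Finpartition (univ : Finset (Fin k))) (d : ℕ) : Prop :=
  HasPermLE d π ∧ ∀ e < d, ¬ HasPermLE e π

/-- `BAvoid n π` is `B_n(π)`, the number of set partitions of `[n]` avoiding `π`. -/
noncomputable def BAvoid {k : ℕ} (n : ℕ) (π : Finpartition (univ : Finset (Fin k))) : ℕ :=
  Nat.card {ρ : Finpartition (univ : Finset (Fin n)) // ¬ KContains ρ π}

/-- `B'_n(π)`: the number of set partitions of `[n]` with no singleton blocks avoiding `π`. -/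
noncomputable def BAvoidNS {k : ℕ} (n : ℕ) (π : Finpartition (univ : Finset (Fin k))) : ℕ :=
  Nat.card {ρ : Finpartition (univ : Finset (Fin n)) //
    ¬ KContains ρ π ∧ ∀ B ∈ ρ.parts, 2 ≤ B.card}

/-- Parallel containment of tuples of permutations. -/
def ParallelContains {n m d : ℕ} (σ : Fin d → Equiv.Perm (Fin n))
    (σ' : Fin d → Equiv.Perm (Fin m)) : Prop :=
  ∃ c : Fin m ↪o Fin n, ∀ (i : Fin d) (a b : Fin m),
    σ' i a < σ' i b ↔ σ i (c a) < σ i (c b)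

private theorem cls_mpos {x d m : ℕ} (h : ¬ x < m) (h2 : x < d * m) : 0 < m := by
  rcases Nat.eq_zero_or_pos m with rfl | hm
  · simp at h2
  · exact hm

private theorem cls_aux1 {x d m : ℕ} (h : ¬ x < m) (h2 : x < d * m) : x / m - 1 < d - 1 := by
  have hm : 0 < m := cls_mpos h h2
  have h1 : 1 ≤ x / m := (Nat.one_le_div_iff hm).2 (le_of_not_gt h)
  have h3 : x / m < d := (Nat.div_lt_iff_lt_mul hm).2 h2
  omega

/-- classifier of the "correspondent prefix + singletons" partition -/
def cls (d m : ℕ) (τ : Fin (d - 1) → Equiv.Perm (Fin m)) (x : ℕ) : ℕ :=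
  if h : x < m then x
  else if h2 : x < d * m then
    (((τ ⟨x / m - 1, cls_aux1 h h2⟩)⁻¹ ⟨x % m, Nat.mod_lt x (cls_mpos h h2)⟩ : Fin m) : ℕ)
  else m + (x - d * m)

theorem cls_low {d m : ℕ} (τ : Fin (d - 1) → Equiv.Perm (Fin m)) {x : ℕ} (hx : x < m) :
    cls d m τ x = x := by simp [cls, hx]

theorem cls_high {d m : ℕ} (τ : Fin (d - 1) → Equiv.Perm (Fin m)) {x : ℕ} (hd : 1 ≤ d)
    (hx : d * m ≤ x) : cls d m τ x = m + (x - d * m) := by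
  have h1 : ¬ x < m := by
    have : m ≤ d * m := Nat.le_mul_of_pos_left m hd
    omega
  have h2 : ¬ x < d * m := not_lt.2 hx
  simp [cls, h1, h2]

theorem cls_mid {d m : ℕ} (τ : Fin (d - 1) → Equiv.Perm (Fin m)) (j : Fin (d - 1)) (y : Fin m) :
    cls d m τ (((j : ℕ) + 1) * m + (y : ℕ)) = (((τ j)⁻¹ y : Fin m) : ℕ) := by
  have hm : 0 < m := y.pos
  have hd : (j : ℕ) + 2 ≤ d := by have := j.2; omega
  have h1 : ¬ ((j : ℕ) + 1) * m + (y : ℕ) < m := by nlinarith [y.2]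
  have h2 : ((j : ℕ) + 1) * m + (y : ℕ) < d * m := by nlinarith [y.2]
  have hdiv : (((j : ℕ) + 1) * m + (y : ℕ)) / m = (j : ℕ) + 1 := by
    rw [Nat.add_comm, Nat.add_mul_div_right _ _ hm, Nat.div_eq_of_lt y.2]; omega
  have hmod : (((j : ℕ) + 1) * m + (y : ℕ)) % m = (y : ℕ) := by
    rw [Nat.add_comm, Nat.add_mul_mod_self_right, Nat.mod_eq_of_lt y.2]
  rw [cls, dif_neg h1, dif_pos h2]
  simp only [hdiv, hmod, Nat.add_sub_cancel, Fin.eta]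


/-! ### Extension of a permutation by identity -/

/-- Extend a permutation of `Fin m` to `Fin (m + r)` fixing the new points. -/
def extPerm {m r : ℕ} (τ : Equiv.Perm (Fin m)) : Equiv.Perm (Fin (m + r)) where
  toFun z := if h : (z : ℕ) < m then ⟨τ ⟨z, h⟩, (τ ⟨z, h⟩).2.trans_le (Nat.le_add_right m r)⟩ else z
  invFun z := if h : (z : ℕ) < m then ⟨τ⁻¹ ⟨z, h⟩, (τ⁻¹ ⟨z, h⟩).2.trans_le (Nat.le_add_right m r)⟩ else z
  left_inv z := by
    by_cases h : (z : ℕ) < m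
    · simp only [dif_pos h]
      rw [dif_pos ((τ ⟨z, h⟩).2)]
      simp [Fin.ext_iff]
    · simp only [dif_neg h]
  right_inv z := by
    by_cases h : (z : ℕ) < m
    · simp only [dif_pos h]
      rw [dif_pos ((τ⁻¹ ⟨z, h⟩).2)]
      simp [Fin.ext_iff]
    · simp only [dif_neg h]

theorem extPerm_low {m r : ℕ} (τ : Equiv.Perm (Fin m)) (z : Fin (m + r)) (h : (z : ℕ) < m) :
    ((extPerm τ z : Fin (m + r)) : ℕ) = ((τ ⟨z, h⟩ : Fin m) : ℕ) := by
  show ((if h : (z : ℕ) < m then _ else _ : Fin (m + r)) : ℕ) = _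
  rw [dif_pos h]

theorem extPerm_high {m r : ℕ} (τ : Equiv.Perm (Fin m)) (z : Fin (m + r)) (h : ¬ (z : ℕ) < m) :
    extPerm τ z = z := by
  show (if h : (z : ℕ) < m then _ else _ : Fin (m + r)) = _
  rw [dif_neg h]

theorem extPerm_inv {m r : ℕ} (τ : Equiv.Perm (Fin m)) :
    (extPerm (r := r) τ)⁻¹ = extPerm τ⁻¹ := rfl

/-! ### Fiber partitions -/

instance kerDec {N : ℕ} (c : Fin N → ℕ) : DecidableRel (Setoid.ker c).r :=
  fun a b => decidable_of_iff (c a = c b) Setoid.ker_def.symm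

/-- The partition of `Fin N` into fibers of `c`. -/
def fiberPart {N : ℕ} (c : Fin N → ℕ) : Finpartition (univ : Finset (Fin N)) :=
  Finpartition.ofSetoid (Setoid.ker c)

theorem sameBlock_fiberPart {N : ℕ} (c : Fin N → ℕ) (a b : Fin N) :
    SameBlock (fiberPart c) a b ↔ c a = c b := by
  constructor
  · rintro ⟨B, hB, haB, hbB⟩
    have := (fiberPart c).part_eq_of_mem hB haB
    rw [← this] at hbB
    exact Finpartition.mem_part_ofSetoid_iff_rel.1 hbB
  · intro h
    exact ⟨(fiberPart c).part a, (fiberPart c).part_mem.2 (mem_univ a),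
      (fiberPart c).mem_part (mem_univ a), Finpartition.mem_part_ofSetoid_iff_rel.2 h⟩

/-! ### Correspondent partitions -/

theorem mem_corrBlock_iff {M D : ℕ} (σ : Fin D → Equiv.Perm (Fin M)) (i : Fin M)
    (x : Fin ((D + 1) * M)) :
    x ∈ corrBlock σ i ↔ cls (D + 1) M σ (x : ℕ) = (i : ℕ) := by
  rw [corrBlock, mem_insert, mem_image]
  constructor
  · rintro (rfl | ⟨j, -, rfl⟩)
    · exact cls_low (d := D + 1) σ i.2
    · rw [show ((⟨((j : ℕ) + 1) * M + ((σ j i : Fin M) : ℕ), _⟩ : Fin ((D + 1) * M)) : ℕ)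
          = ((j : ℕ) + 1) * M + ((σ j i : Fin M) : ℕ) from rfl]
      rw [cls_mid (d := D + 1) σ j (σ j i), Equiv.Perm.inv_def, Equiv.symm_apply_apply]
  · intro h
    by_cases hx : (x : ℕ) < M
    · left
      rw [cls_low (d := D + 1) σ hx] at h
      exact Fin.ext h
    · right
      have hx2 : (x : ℕ) < (D + 1) * M := x.2
      have hm : 0 < M := cls_mpos hx hx2
      refine ⟨⟨(x : ℕ) / M - 1, cls_aux1 hx hx2⟩, mem_univ _, ?_⟩
      rw [cls, dif_neg hx, dif_pos hx2] at h
      have hσ : σ ⟨(x : ℕ) / M - 1, cls_aux1 hx hx2⟩ i = ⟨(x : ℕ) % M, Nat.mod_lt _ hm⟩ := by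
        rw [← Fin.ext_iff.2 h]
        simp
      apply Fin.ext
      show ((x : ℕ) / M - 1 + 1) * M + _ = (x : ℕ)
      rw [hσ]
      have h1 : 1 ≤ (x : ℕ) / M := (Nat.one_le_div_iff hm).2 (le_of_not_gt hx)
      have := Nat.div_add_mod (x : ℕ) M
      show ((x : ℕ) / M - 1 + 1) * M + (x : ℕ) % M = (x : ℕ)
      rw [Nat.sub_add_cancel h1, Nat.mul_comm]
      exact this

/-- cls is < M on the low range. -/
theorem cls_lt_m {d m : ℕ} (τ : Fin (d - 1) → Equiv.Perm (Fin m)) {x : ℕ} (hx : x < d * m) :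
    cls d m τ x < m := by
  by_cases h : x < m
  · rw [cls_low τ h]; exact h
  · rw [cls, dif_neg h, dif_pos hx]
    exact ((τ _)⁻¹ _).2

/-- The correspondent partition of a tuple of permutations. -/
def corrPart {M D : ℕ} (σ : Fin D → Equiv.Perm (Fin M)) :
    Finpartition (univ : Finset (Fin ((D + 1) * M))) :=
  fiberPart (fun x => cls (D + 1) M σ (x : ℕ))

theorem corrPart_part_eq {M D : ℕ} (σ : Fin D → Equiv.Perm (Fin M)) (a : Fin ((D + 1) * M)) :
    (corrPart σ).part a = corrBlock σ ⟨cls (D + 1) M σ (a : ℕ), cls_lt_m σ a.2⟩ := by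
  ext x
  rw [mem_corrBlock_iff]
  show x ∈ (Finpartition.ofSetoid (Setoid.ker fun z : Fin ((D + 1) * M) =>
    cls (D + 1) M σ (z : ℕ))).part a ↔ _
  rw [Finpartition.mem_part_ofSetoid_iff_rel]
  exact ⟨fun h => (Setoid.ker_def.1 h).symm, fun h => Setoid.ker_def.2 h.symm⟩

theorem isCorrespondent_corrPart {M D : ℕ} (σ : Fin D → Equiv.Perm (Fin M)) :
    IsCorrespondent σ (corrPart σ) := by
  rw [IsCorrespondent]
  apply Finset.Subset.antisymm
  · intro B hB
    obtain ⟨a, -, ha⟩ := (corrPart σ).part_surjOn hB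
    rw [mem_image]
    exact ⟨_, mem_univ _, by rw [← ha, corrPart_part_eq]⟩
  · rw [image_subset_iff]
    rintro i -
    have hiM : (i : ℕ) < (D + 1) * M := i.2.trans_le (Nat.le_mul_of_pos_left M (Nat.succ_pos D))
    have : corrBlock σ i = (corrPart σ).part ⟨(i : ℕ), hiM⟩ := by
      rw [corrPart_part_eq]
      congr 1
      exact Fin.ext (cls_low (d := D + 1) σ i.2).symm
    rw [this]
    exact (corrPart σ).part_mem.2 (mem_univ _)
/-! ### The order embedding into the correspondent partition -/

/-- The embedding map on indices. -/
def Fm (e m r x : ℕ) : ℕ :=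
  if x < (e + 1) * m then (x / m) * (m + r) + x % m else e * (m + r) + m + (x - (e + 1) * m)

theorem Fm_mono (e m r : ℕ) : StrictMono (Fm e m r) := by
  intro u v huv
  by_cases hu1 : u < (e + 1) * m
  · have hm : 0 < m := Nat.pos_of_ne_zero (by rintro rfl; simp at hu1)
    have hu2 := Nat.div_add_mod u m
    have hum := Nat.mod_lt u hm
    have hud : u / m < e + 1 := (Nat.div_lt_iff_lt_mul hm).2 hu1
    by_cases hv1 : v < (e + 1) * m
    · have hv2 := Nat.div_add_mod v m
      have hvm := Nat.mod_lt v hm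
      have hdd : u / m ≤ v / m := Nat.div_le_div_right (le_of_lt huv)
      simp only [Fm, if_pos hu1, if_pos hv1]
      rcases Nat.eq_or_lt_of_le hdd with heq | hlt
      · rw [heq] at hu2 ⊢
        omega
      · have k1 : (u / m + 1) * (m + r) ≤ (v / m) * (m + r) := Nat.mul_le_mul_right _ hlt
        have k2 : (u / m + 1) * (m + r) = (u / m) * (m + r) + (m + r) := by ring
        omega
    · simp only [Fm, if_pos hu1, if_neg hv1]
      have k1 : (u / m) * (m + r) ≤ e * (m + r) := Nat.mul_le_mul_right _ (by omega)
      omega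
  · have hv1 : ¬ v < (e + 1) * m := by omega
    simp only [Fm, if_neg hu1, if_neg hv1]
    omega

theorem Fm_lt {e m r x : ℕ} (hx : x < (e + 1) * m + r) : Fm e m r x < (e + 1) * (m + r) := by
  have key : (e + 1) * (m + r) = e * (m + r) + m + r := by ring
  by_cases h : x < (e + 1) * m
  · have hm : 0 < m := Nat.pos_of_ne_zero (by rintro rfl; simp at h)
    have hud : x / m < e + 1 := (Nat.div_lt_iff_lt_mul hm).2 h
    have hum := Nat.mod_lt x hm
    have k1 : (x / m) * (m + r) ≤ e * (m + r) := Nat.mul_le_mul_right _ (by omega)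
    simp only [Fm, if_pos h]
    omega
  · simp only [Fm, if_neg h]
    omega

theorem Fm_low {e m r x : ℕ} (hx : x < m) : Fm e m r x = x := by
  have h : x < (e + 1) * m := hx.trans_le (Nat.le_mul_of_pos_left m (Nat.succ_pos e))
  simp only [Fm, if_pos h]
  rw [Nat.div_eq_of_lt hx, Nat.mod_eq_of_lt hx, Nat.zero_mul, Nat.zero_add]

theorem Fm_mid {e m r : ℕ} (j : Fin e) (y : Fin m) :
    Fm e m r (((j : ℕ) + 1) * m + (y : ℕ)) = ((j : ℕ) + 1) * (m + r) + (y : ℕ) := by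
  have hm : 0 < m := y.pos
  have hj2 : (j : ℕ) + 2 ≤ e + 1 := by have := j.2; omega
  have k2 : ((j : ℕ) + 2) * m = ((j : ℕ) + 1) * m + m := by ring
  have k3 : ((j : ℕ) + 2) * m ≤ (e + 1) * m := Nat.mul_le_mul_right _ hj2
  have h : ((j : ℕ) + 1) * m + (y : ℕ) < (e + 1) * m := by have := y.2; omega
  have hdiv : (((j : ℕ) + 1) * m + (y : ℕ)) / m = (j : ℕ) + 1 := by
    rw [Nat.add_comm, Nat.add_mul_div_right _ _ hm, Nat.div_eq_of_lt y.2]; omega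
  have hmod : (((j : ℕ) + 1) * m + (y : ℕ)) % m = (y : ℕ) := by
    rw [Nat.add_comm, Nat.add_mul_mod_self_right, Nat.mod_eq_of_lt y.2]
  simp only [Fm, if_pos h, hdiv, hmod]

theorem Fm_high {e m r x : ℕ} (hx : (e + 1) * m ≤ x) :
    Fm e m r x = e * (m + r) + m + (x - (e + 1) * m) := by
  simp only [Fm, if_neg (not_lt.2 hx)]

theorem rep_mid {e m x : ℕ} (h1 : ¬ x < m) (h2 : x < (e + 1) * m) :
    ∃ (j : Fin e) (y : Fin m), x = ((j : ℕ) + 1) * m + (y : ℕ) := by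
  have hm : 0 < m := cls_mpos h1 h2
  have hj : x / m - 1 < e := cls_aux1 (d := e + 1) h1 h2
  refine ⟨⟨x / m - 1, hj⟩, ⟨x % m, Nat.mod_lt _ hm⟩, ?_⟩
  have h1' : 1 ≤ x / m := (Nat.one_le_div_iff hm).2 (le_of_not_gt h1)
  have := Nat.div_add_mod x m
  show x = (x / m - 1 + 1) * m + x % m
  rw [Nat.sub_add_cancel h1', Nat.mul_comm]
  omega

theorem cls_Fm {e m r : ℕ} (τ : Fin e → Equiv.Perm (Fin m)) {x : ℕ}
    (hx : x < (e + 1) * m + r) :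
    cls (e + 1) (m + r) (fun j => extPerm (r := r) (τ j)) (Fm e m r x) =
      cls (e + 1) m τ x := by
  by_cases h1 : x < m
  · rw [Fm_low h1, cls_low (d := e + 1) _ (h1.trans_le (Nat.le_add_right m r)),
      cls_low (d := e + 1) τ h1]
  · by_cases h2 : x < (e + 1) * m
    · obtain ⟨j, y, rfl⟩ := rep_mid h1 h2
      rw [Fm_mid j y]
      have hy' : (y : ℕ) < m + r := y.2.trans_le (Nat.le_add_right m r)
      have key := cls_mid (d := e + 1) (fun j => extPerm (r := r) (τ j)) j ⟨(y : ℕ), hy'⟩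
      refine key.trans ?_
      rw [cls_mid (d := e + 1) τ j y, extPerm_inv]
      rw [extPerm_low ((τ j)⁻¹) ⟨(y : ℕ), hy'⟩ y.2]
    · have hx' : (e + 1) * m ≤ x := le_of_not_gt h2
      rw [Fm_high hx', cls_high (d := e + 1) τ (by omega) hx']
      set t := x - (e + 1) * m with ht
      have htr : t < r := by omega
      rcases Nat.eq_zero_or_pos e with rfl | he
      · have : 0 * (m + r) + m + t < m + r := by omega
        rw [cls_low (d := 0 + 1) _ this]
        omega
      · have hj : e - 1 < e := by omega
        have hy : m + t < m + r := by omega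
        have harg : e * (m + r) + m + t = ((e - 1 : ℕ) + 1) * (m + r) + (m + t) := by
          rw [Nat.sub_add_cancel he]; omega
        rw [harg]
        have key := cls_mid (d := e + 1) (fun j => extPerm (r := r) (τ j))
          ⟨e - 1, hj⟩ ⟨m + t, hy⟩
        refine key.trans ?_
        rw [extPerm_inv, extPerm_high _ ⟨m + t, hy⟩ (not_lt.2 (Nat.le_add_right m t))]

/-! ### KContains lemmas -/

theorem kContains_trans {n₁ n₂ n₃ : ℕ} {P : Finpartition (univ : Finset (Fin n₁))}
    {Q : Finpartition (univ : Finset (Fin n₂))} {R : Finpartition (univ : Finset (Fin n₃))}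
    (h1 : KContains P Q) (h2 : KContains Q R) : KContains P R := by
  obtain ⟨f, hf⟩ := h1
  obtain ⟨g, hg⟩ := h2
  exact ⟨g.trans f, fun a b => (hg a b).trans (hf (g a) (g b))⟩

theorem kContains_corr (e m r n : ℕ) (hn : n = (e + 1) * m + r) (τ : Fin e → Equiv.Perm (Fin m)) :
    KContains (corrPart (fun j => extPerm (r := r) (τ j)))
      (fiberPart (fun x : Fin n => cls (e + 1) m τ (x : ℕ))) := by
  have femb : Fin n ↪o Fin ((e + 1) * (m + r)) := OrderEmbedding.ofStrictMono
    (fun x : Fin n => (⟨Fm e m r (x : ℕ), Fm_lt (hn ▸ x.2)⟩ : Fin ((e + 1) * (m + r))))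
    (fun a b hab => Fm_mono e m r hab)
  refine ⟨OrderEmbedding.ofStrictMono
    (fun x : Fin n => (⟨Fm e m r (x : ℕ), Fm_lt (hn ▸ x.2)⟩ : Fin ((e + 1) * (m + r))))
    (fun a b hab => Fm_mono e m r hab), fun a b => ?_⟩
  rw [sameBlock_fiberPart]
  rw [show (corrPart (fun j => extPerm (r := r) (τ j))) =
    fiberPart (fun x : Fin ((e + 1) * (m + r)) =>
      cls (e + 1) (m + r) (fun j => extPerm (r := r) (τ j)) (x : ℕ)) from rfl]
  rw [sameBlock_fiberPart]
  have key : ∀ x : Fin n,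
      cls (e + 1) (m + r) (fun j => extPerm (r := r) (τ j))
        ((OrderEmbedding.ofStrictMono
          (fun x : Fin n => (⟨Fm e m r (x : ℕ), Fm_lt (hn ▸ x.2)⟩ : Fin ((e + 1) * (m + r))))
          (fun a b hab => Fm_mono e m r hab) x : Fin ((e + 1) * (m + r))) : ℕ) =
        cls (e + 1) m τ (x : ℕ) := fun x => cls_Fm τ (hn ▸ x.2)
  rw [key a, key b]

theorem avoid_main {k : ℕ} (π : Finpartition (univ : Finset (Fin k))) (e m r n : ℕ)
    (hn : n = (e + 1) * m + r) (hnp : ¬ HasPermLE e π) (τ : Fin e → Equiv.Perm (Fin m)) :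
    ¬ KContains (fiberPart (fun x : Fin n => cls (e + 1) m τ (x : ℕ))) π := fun h =>
  hnp ⟨m + r, fun j => extPerm (τ j), corrPart _, isCorrespondent_corrPart _,
    kContains_trans (kContains_corr e m r n hn τ) h⟩

/-! ### Injectivity and counting -/

theorem fiber_inj {e m r n : ℕ} (hn : n = (e + 1) * m + r) :
    Function.Injective (fun τ : Fin e → Equiv.Perm (Fin m) =>
      fiberPart (fun x : Fin n => cls (e + 1) m τ (x : ℕ))) := by
  intro τ τ' h
  funext j
  apply Equiv.ext
  intro i
  have hm : 0 < m := i.pos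
  have hme : m ≤ (e + 1) * m := Nat.le_mul_of_pos_left m (Nat.succ_pos e)
  have hin : (i : ℕ) < n := by have := i.2; omega
  have k2 : ((j : ℕ) + 2) * m = ((j : ℕ) + 1) * m + m := by ring
  have k3 : ((j : ℕ) + 2) * m ≤ (e + 1) * m :=
    Nat.mul_le_mul_right _ (by have := j.2; omega)
  have hbn : ((j : ℕ) + 1) * m + ((τ j i : Fin m) : ℕ) < n := by
    have := (τ j i).2; omega
  have hsb : SameBlock (fiberPart (fun x : Fin n => cls (e + 1) m τ (x : ℕ)))
      ⟨(i : ℕ), hin⟩ ⟨_, hbn⟩ := by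
    rw [sameBlock_fiberPart]
    show cls (e + 1) m τ (i : ℕ) = cls (e + 1) m τ (((j : ℕ) + 1) * m + ((τ j i : Fin m) : ℕ))
    rw [cls_low (d := e + 1) τ i.2, cls_mid (d := e + 1) τ j (τ j i),
      Equiv.Perm.inv_def, Equiv.symm_apply_apply]
  have hEq : fiberPart (fun x : Fin n => cls (e + 1) m τ (x : ℕ)) =
      fiberPart (fun x : Fin n => cls (e + 1) m τ' (x : ℕ)) := h
  rw [hEq, sameBlock_fiberPart] at hsb
  have hsb2 : cls (e + 1) m τ' (i : ℕ) =
      cls (e + 1) m τ' (((j : ℕ) + 1) * m + ((τ j i : Fin m) : ℕ)) := hsb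
  rw [cls_low (d := e + 1) τ' i.2, cls_mid (d := e + 1) τ' j (τ j i)] at hsb2
  have h2 : (τ' j)⁻¹ (τ j i) = i := Fin.ext hsb2.symm
  have h3 := congrArg (τ' j) h2
  rw [Equiv.Perm.inv_def, Equiv.apply_symm_apply] at h3
  exact h3

theorem count_lb {k : ℕ} (π : Finpartition (univ : Finset (Fin k))) (e m r n : ℕ)
    (hn : n = (e + 1) * m + r) (hnp : ¬ HasPermLE e π) :
    (Nat.factorial m) ^ e ≤ BAvoid n π := by
  rw [BAvoid]
  have hcard : Nat.card (Fin e → Equiv.Perm (Fin m)) = (Nat.factorial m) ^ e := by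
    simp [Nat.card_eq_fintype_card, Fintype.card_fun, Fintype.card_perm]
  rw [← hcard]
  exact Nat.card_le_card_of_injective
    (fun τ => (⟨fiberPart (fun x : Fin n => cls (e + 1) m τ (x : ℕ)),
      avoid_main π e m r n hn hnp τ⟩ :
      {ρ : Finpartition (univ : Finset (Fin n)) // ¬ KContains ρ π}))
    (fun τ τ' hh => fiber_inj hn (Subtype.ext_iff.1 hh))
/-! ### Analysis -/

theorem fact_ge (m : ℕ) : ((m : ℝ) / Real.exp 1) ^ m ≤ (Nat.factorial m : ℝ) := by
  induction m with
  | zero => simp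
  | succ p ih =>
    push_cast
    have hexp : (0 : ℝ) < Real.exp 1 := Real.exp_pos 1
    have key : ((p : ℝ) + 1) ^ p ≤ Real.exp 1 * (p : ℝ) ^ p := by
      rcases Nat.eq_zero_or_pos p with rfl | hp
      · simpa using Real.one_le_exp (by norm_num)
      · have hp' : (0 : ℝ) < p := by exact_mod_cast hp
        have h1 : (p : ℝ) + 1 ≤ (p : ℝ) * Real.exp (1 / (p : ℝ)) := by
          have h2 := Real.add_one_le_exp (1 / (p : ℝ))
          have h3 : (p : ℝ) * (1 / (p : ℝ)) = 1 := by field_simp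
          nlinarith [h2, h3, hp']
        calc ((p : ℝ) + 1) ^ p ≤ ((p : ℝ) * Real.exp (1 / p)) ^ p := by
              apply pow_le_pow_left₀ (by positivity) h1
          _ = (p : ℝ) ^ p * Real.exp (1 / p) ^ p := mul_pow _ _ _
          _ = (p : ℝ) ^ p * Real.exp (p * (1 / p)) := by rw [← Real.exp_nat_mul]
          _ = (p : ℝ) ^ p * Real.exp 1 := by rw [mul_one_div, div_self (ne_of_gt hp')]
          _ = Real.exp 1 * (p : ℝ) ^ p := mul_comm _ _
    have main : (((p : ℝ) + 1) / Real.exp 1) ^ (p + 1) ≤ ((p : ℝ) + 1) * ((p : ℝ) / Real.exp 1) ^ p := by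
      have e1 : (((p : ℝ) + 1) / Real.exp 1) ^ (p + 1)
          = (((p : ℝ) + 1) ^ p * ((p : ℝ) + 1)) / (Real.exp 1 ^ p * Real.exp 1) := by
        rw [div_pow, pow_succ, pow_succ]
      have e2 : ((p : ℝ) + 1) * ((p : ℝ) / Real.exp 1) ^ p
          = ((Real.exp 1 * (p : ℝ) ^ p) * ((p : ℝ) + 1)) / (Real.exp 1 ^ p * Real.exp 1) := by
        rw [div_pow]
        field_simp
        try ring
      rw [e1, e2]
      gcongr
    calc (((p : ℝ) + 1) / Real.exp 1) ^ (p + 1)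
        ≤ ((p : ℝ) + 1) * ((p : ℝ) / Real.exp 1) ^ p := main
      _ ≤ ((p : ℝ) + 1) * (Nat.factorial p : ℝ) := by
          apply mul_le_mul_of_nonneg_left ih (by positivity)
      _ = (Nat.factorial (p + 1) : ℝ) := by
          rw [Nat.factorial_succ]; push_cast; ring

theorem pow_shuffle (c X Y M : ℝ) (n : ℕ) :
    c ^ n * ((X ^ n * M) * Y ^ n) = (c * (X * Y)) ^ n * M := by
  rw [mul_pow, mul_pow]; ring

theorem le_mul_aux {X Y Z : ℝ} (hX : 0 ≤ X) (hY : 1 ≤ Y) (hZ : 1 ≤ Z) : X ≤ X * Y * Z := by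
  calc X = X * 1 * 1 := by ring
    _ ≤ X * Y * Z := by
        apply mul_le_mul (mul_le_mul le_rfl hY zero_le_one hX) hZ zero_le_one
        positivity

theorem analysis (e n m r : ℕ) (hn : 1 ≤ n) (hd : n = (e + 1) * m + r) (hr : r < e + 1) :
    (1 / ((2 * ((e : ℝ) + 1)) ^ (e + 2) * Real.exp 1 * 2 ^ (e + 1))) ^ n *
      (n : ℝ) ^ ((n : ℝ) * (1 - 1 / ((e : ℝ) + 1))) ≤ ((Nat.factorial m : ℝ)) ^ e := by
  have hE1 : 1 ≤ Real.exp 1 := Real.one_le_exp zero_le_one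
  have hE0 : (0 : ℝ) < Real.exp 1 := Real.exp_pos 1
  have hD1 : (1 : ℝ) ≤ (e : ℝ) + 1 := by
    have : (0 : ℝ) ≤ (e : ℝ) := Nat.cast_nonneg e
    linarith
  have hD0 : (0 : ℝ) < (e : ℝ) + 1 := by linarith
  set c : ℝ := 1 / ((2 * ((e : ℝ) + 1)) ^ (e + 2) * Real.exp 1 * 2 ^ (e + 1)) with hc
  clear_value c
  have hc0 : 0 < c := by rw [hc]; positivity
  have hc1 : c ≤ 1 := by
    rw [hc]
    rw [div_le_one (by positivity)]
    calc (1 : ℝ) ≤ (2 * ((e : ℝ) + 1)) ^ (e + 2) := one_le_pow₀ (by linarith)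
      _ ≤ (2 * ((e : ℝ) + 1)) ^ (e + 2) * Real.exp 1 * 2 ^ (e + 1) :=
          le_mul_aux (by positivity) hE1 (one_le_pow₀ (by norm_num))
  have hNpos : (0 : ℝ) < (n : ℝ) := by exact_mod_cast hn
  have hN1 : (1 : ℝ) ≤ (n : ℝ) := by exact_mod_cast hn
  have hcastn : (n : ℝ) = ((e : ℝ) + 1) * m + r := by
    rw [hd]; push_cast; ring
  -- exponent identity
  have hexp : (n : ℝ) * (1 - 1 / ((e : ℝ) + 1)) =
      ((m * e : ℕ) : ℝ) + ((r * e : ℕ) : ℝ) / ((e : ℝ) + 1) := by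
    push_cast
    rw [hcastn]
    field_simp
    ring
  rw [hexp, Real.rpow_add hNpos, Real.rpow_natCast]
  rcases Nat.eq_zero_or_pos m with rfl | hm
  · -- m = 0 : n = r ≤ e
    have hne : n ≤ e := by omega
    have hfact : ((Nat.factorial 0 : ℝ)) ^ e = 1 := by norm_num
    rw [hfact]
    have h1 : (n : ℝ) ^ (0 * e) = 1 := by norm_num
    rw [Nat.zero_mul, pow_zero, one_mul]
    -- bound n ^ (re/(e+1)) ≤ ((e:ℝ)+1) ^ (e+1)
    have h2 : (n : ℝ) ^ (((r * e : ℕ) : ℝ) / ((e : ℝ) + 1)) ≤ (n : ℝ) ^ ((e : ℝ) + 1) := by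
      apply Real.rpow_le_rpow_of_exponent_le hN1
      rw [div_le_iff₀ hD0]
      have hre : ((r * e : ℕ) : ℝ) ≤ (e : ℝ) * ((e : ℝ) + 1) := by
        push_cast
        have : (r : ℝ) ≤ (e : ℝ) + 1 := by exact_mod_cast Nat.le_of_lt hr
        nlinarith [Nat.cast_nonneg (α := ℝ) e, Nat.cast_nonneg (α := ℝ) r]
      calc ((r * e : ℕ) : ℝ) ≤ (e : ℝ) * ((e : ℝ) + 1) := hre
        _ ≤ ((e : ℝ) + 1) * ((e : ℝ) + 1) := by nlinarith
    have h3 : (n : ℝ) ^ ((e : ℝ) + 1) ≤ ((e : ℝ) + 1) ^ ((e : ℝ) + 1) := by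
      apply Real.rpow_le_rpow (by positivity) _ (by linarith)
      have : (n : ℝ) ≤ (e : ℝ) := by exact_mod_cast hne
      linarith
    have h4 : ((e : ℝ) + 1) ^ ((e : ℝ) + 1) = ((e : ℝ) + 1) ^ (e + 1 : ℕ) := by
      rw [← Real.rpow_natCast ((e : ℝ) + 1) (e + 1)]
      norm_num
    have h5 : c ^ n ≤ c := by
      calc c ^ n ≤ c ^ 1 := pow_le_pow_of_le_one (le_of_lt hc0) hc1 hn
        _ = c := pow_one c
    have h6 : c * (((e : ℝ) + 1) ^ (e + 1 : ℕ)) ≤ 1 := by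
      rw [hc]
      rw [div_mul_eq_mul_div, div_le_one (by positivity), one_mul]
      calc ((e : ℝ) + 1) ^ (e + 1)
          ≤ (2 * ((e : ℝ) + 1)) ^ (e + 1) := pow_le_pow_left₀ (by positivity) (by linarith) _
        _ ≤ (2 * ((e : ℝ) + 1)) ^ (e + 2) := pow_le_pow_right₀ (by linarith) (by omega)
        _ ≤ (2 * ((e : ℝ) + 1)) ^ (e + 2) * Real.exp 1 * 2 ^ (e + 1) :=
            le_mul_aux (by positivity) hE1 (one_le_pow₀ (by norm_num))
    calc c ^ n * (n : ℝ) ^ (((r * e : ℕ) : ℝ) / ((e : ℝ) + 1))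
        ≤ c * (((e : ℝ) + 1) ^ (e + 1 : ℕ)) := by
          apply mul_le_mul h5 (by rw [← h4]; exact h2.trans h3) (by positivity) (le_of_lt hc0)
      _ ≤ 1 := h6
  · -- m ≥ 1
    have hm1 : (1 : ℝ) ≤ (m : ℝ) := by exact_mod_cast hm
    have hmen : m * e ≤ n := by
      have h8 : m * e ≤ m * (e + 1) := Nat.mul_le_mul_left m (Nat.le_succ e)
      have h9 : m * (e + 1) = (e + 1) * m := Nat.mul_comm _ _
      omega
    have hn2dm : (n : ℝ) ≤ 2 * ((e : ℝ) + 1) * m := by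
      have h7 : n ≤ 2 * ((e + 1) * m) := by
        have := Nat.le_mul_of_pos_right (e + 1) hm
        omega
      calc (n : ℝ) ≤ ((2 * ((e + 1) * m) : ℕ) : ℝ) := by exact_mod_cast h7
        _ = 2 * ((e : ℝ) + 1) * m := by push_cast; ring
    have hA : (n : ℝ) ^ (m * e) ≤ (2 * ((e : ℝ) + 1)) ^ n * (m : ℝ) ^ (m * e) := by
      calc (n : ℝ) ^ (m * e) ≤ (2 * ((e : ℝ) + 1) * m) ^ (m * e) :=
            pow_le_pow_left₀ (by positivity) hn2dm _
        _ = (2 * ((e : ℝ) + 1)) ^ (m * e) * (m : ℝ) ^ (m * e) := mul_pow _ _ _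
        _ ≤ (2 * ((e : ℝ) + 1)) ^ n * (m : ℝ) ^ (m * e) := by
            apply mul_le_mul_of_nonneg_right (pow_le_pow_right₀ (by linarith) hmen) (by positivity)
    have hB : (n : ℝ) ^ (((r * e : ℕ) : ℝ) / ((e : ℝ) + 1)) ≤ ((2 : ℝ) ^ (e + 1)) ^ n := by
      have s1 : (n : ℝ) ^ (((r * e : ℕ) : ℝ) / ((e : ℝ) + 1)) ≤ (n : ℝ) ^ ((e : ℕ) : ℝ) := by
        apply Real.rpow_le_rpow_of_exponent_le hN1
        rw [div_le_iff₀ hD0]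
        push_cast
        have hrle : (r : ℝ) ≤ (e : ℝ) + 1 := by exact_mod_cast Nat.le_of_lt hr
        nlinarith [Nat.cast_nonneg (α := ℝ) e]
      have s2 : (n : ℝ) ^ ((e : ℕ) : ℝ) = (n : ℝ) ^ (e : ℕ) := Real.rpow_natCast _ e
      have s3 : (n : ℝ) ^ (e : ℕ) ≤ ((2 : ℝ) ^ n) ^ e := by
        apply pow_le_pow_left₀ (by positivity)
        calc (n : ℝ) ≤ ((2 ^ n : ℕ) : ℝ) := by exact_mod_cast (Nat.lt_two_pow_self (n := n)).le
          _ = (2 : ℝ) ^ n := by push_cast; rfl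
      have s4 : ((2 : ℝ) ^ n) ^ e = ((2 : ℝ) ^ e) ^ n := pow_right_comm 2 n e
      have s5 : ((2 : ℝ) ^ e) ^ n ≤ ((2 : ℝ) ^ (e + 1)) ^ n := by
        apply pow_le_pow_left₀ (by positivity)
        exact pow_le_pow_right₀ (by norm_num) (Nat.le_succ e)
      calc (n : ℝ) ^ (((r * e : ℕ) : ℝ) / ((e : ℝ) + 1)) ≤ (n : ℝ) ^ ((e : ℕ) : ℝ) := s1
        _ = (n : ℝ) ^ (e : ℕ) := s2
        _ ≤ ((2 : ℝ) ^ n) ^ e := s3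
        _ = ((2 : ℝ) ^ e) ^ n := s4
        _ ≤ ((2 : ℝ) ^ (e + 1)) ^ n := s5
    have hC : (m : ℝ) ^ (m * e) * (1 / Real.exp 1) ^ n ≤ ((Nat.factorial m : ℝ)) ^ e := by
      have t1 : ((m : ℝ) / Real.exp 1) ^ m ≤ (Nat.factorial m : ℝ) := fact_ge m
      have t2 : (((m : ℝ) / Real.exp 1) ^ m) ^ e ≤ ((Nat.factorial m : ℝ)) ^ e :=
        pow_le_pow_left₀ (by positivity) t1 e
      have t3 : (((m : ℝ) / Real.exp 1) ^ m) ^ e = (m : ℝ) ^ (m * e) * (1 / Real.exp 1) ^ (m * e) := by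
        rw [← pow_mul, div_eq_mul_one_div, mul_pow]
      have t4 : (1 / Real.exp 1) ^ n ≤ (1 / Real.exp 1) ^ (m * e) := by
        apply pow_le_pow_of_le_one (by positivity) _ hmen
        rw [div_le_one hE0]
        exact hE1
      calc (m : ℝ) ^ (m * e) * (1 / Real.exp 1) ^ n
          ≤ (m : ℝ) ^ (m * e) * (1 / Real.exp 1) ^ (m * e) :=
            mul_le_mul_of_nonneg_left t4 (by positivity)
        _ = (((m : ℝ) / Real.exp 1) ^ m) ^ e := t3.symm
        _ ≤ ((Nat.factorial m : ℝ)) ^ e := t2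
    have key : c * (2 * ((e : ℝ) + 1) * 2 ^ (e + 1)) ≤ 1 / Real.exp 1 := by
      rw [le_div_iff₀ hE0, hc, div_mul_eq_mul_div, one_mul, div_mul_eq_mul_div,
        div_le_one (by positivity)]
      have k1 : (2 * ((e : ℝ) + 1)) ≤ (2 * ((e : ℝ) + 1)) ^ (e + 2) :=
        le_self_pow₀ (by linarith) (by omega)
      have k2 : (0 : ℝ) < 2 ^ (e + 1) := by positivity
      nlinarith [mul_le_mul_of_nonneg_right (mul_le_mul_of_nonneg_right k1 k2.le) hE0.le]
    calc c ^ n * ((n : ℝ) ^ (m * e) * (n : ℝ) ^ (((r * e : ℕ) : ℝ) / ((e : ℝ) + 1)))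
        ≤ c ^ n * (((2 * ((e : ℝ) + 1)) ^ n * (m : ℝ) ^ (m * e)) * ((2 : ℝ) ^ (e + 1)) ^ n) := by
          apply mul_le_mul_of_nonneg_left
            (mul_le_mul hA hB (by positivity) (by positivity)) (by positivity)
      _ = (c * (2 * ((e : ℝ) + 1) * 2 ^ (e + 1))) ^ n * (m : ℝ) ^ (m * e) :=
          pow_shuffle c _ _ _ n
      _ ≤ (1 / Real.exp 1) ^ n * (m : ℝ) ^ (m * e) := by
          apply mul_le_mul_of_nonneg_right
            (pow_le_pow_left₀ (by positivity) key n) (by positivity)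
      _ = (m : ℝ) ^ (m * e) * (1 / Real.exp 1) ^ n := mul_comm _ _
      _ ≤ ((Nat.factorial m : ℝ)) ^ e := hC

/-- lower bound `B_n(π) ≥ c₁ⁿ · n^{n(1-1/d)}` when `pm(π) = d ≥ 1`. -/
theorem stmt9 (k d : ℕ) (hd : 1 ≤ d) (π : Finpartition (univ : Finset (Fin k)))
    (hperm : Permutability π d) :
    ∃ c₁ : ℝ, 0 < c₁ ∧ ∀ n : ℕ, 1 ≤ n →
      c₁ ^ n * (n : ℝ) ^ ((n : ℝ) * (1 - 1 / (d : ℝ))) ≤ (BAvoid n π : ℝ) := by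
  obtain ⟨e, rfl⟩ : ∃ e, d = e + 1 := ⟨d - 1, by omega⟩
  have hnp : ¬ HasPermLE e π := hperm.2 e (by omega)
  refine ⟨1 / ((2 * ((e : ℝ) + 1)) ^ (e + 2) * Real.exp 1 * 2 ^ (e + 1)), by positivity, ?_⟩
  intro n hn
  have hdm : n = (e + 1) * (n / (e + 1)) + n % (e + 1) := (Nat.div_add_mod n (e + 1)).symm
  have hr : n % (e + 1) < e + 1 := Nat.mod_lt n (Nat.succ_pos e)
  have hcount := count_lb π e (n / (e + 1)) (n % (e + 1)) n hdm hnp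
  have hana := analysis e n (n / (e + 1)) (n % (e + 1)) hn hdm hr
  have hcast : ((e + 1 : ℕ) : ℝ) = (e : ℝ) + 1 := by push_cast; ring
  rw [hcast]
  refine hana.trans ?_
  have hcc : ((Nat.factorial (n / (e + 1)) ^ e : ℕ) : ℝ) ≤ ((BAvoid n π : ℕ) : ℝ) :=
    Nat.cast_le.2 hcount
  push_cast at hcc
  exact hcc
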